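/- Fix k ≥ 1 and the two-letter alphabet {a, b}, and let W = {a·a·b^k·a·a} and F = {a·b^k·a}. There exists a nondeterministic finite automaton M with 5 states such that W ⊆ L(M) and no word of L(M) \ W contains the word a·b^k·a as a factor, whereas every nondeterministic finite automaton N with L(N) = W has at least k + 5 states. (Hence, for these W and F, the smallest NFA accepting a superset of W whose extra words avoid all forbidden patterns of F is strictly smaller than the minimal NFA accepting W exactly.) -/

import Mathlib

/-- The letter `a` of the two-letter alphabet `{a, b}`, modeled as `Bool`. -/
def la : Bool := true

/-- The letter `b` of the two-letter alphabet `{a, b}`, modeled as `Bool`. -/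
def lb : Bool := false

/-- The target word `a·a·b^k·a·a`. -/
def aabkaa (k : ℕ) : List Bool := [la, la] ++ List.replicate k lb ++ [la, la]

/-- The forbidden pattern `a·b^k·a`. -/
def abka (k : ℕ) : List Bool := [la] ++ List.replicate k lb ++ [la]

/-- The 5-state cover NFA. -/
def M5 : NFA Bool (Fin 5) where
  step q c :=
    if q = 0 ∧ c = la then {1}
    else if q = 1 ∧ c = la then {2}
    else if q = 2 ∧ c = lb then {2}
    else if q = 2 ∧ c = la then {3}
    else if q = 3 ∧ c = la then {4}
    else ∅
  start := {0}
  accept := {4}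

lemma M5_eval_char (w : List Bool) (q : Fin 5) :
    q ∈ M5.eval w ↔
      (q = 0 ∧ w = []) ∨ (q = 1 ∧ w = [la]) ∨
      (q = 2 ∧ ∃ n, w = [la, la] ++ List.replicate n lb) ∨
      (q = 3 ∧ ∃ n, w = [la, la] ++ List.replicate n lb ++ [la]) ∨
      (q = 4 ∧ ∃ n, w = [la, la] ++ List.replicate n lb ++ [la, la]) := by
  induction w using List.reverseRecOn generalizing q with
  | nil =>
    simp [M5, NFA.eval_nil]
  | append_singleton w c IH =>
    rw [NFA.eval_append_singleton, NFA.mem_stepSet]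
    constructor
    · rintro ⟨p, hp, hq⟩
      rw [IH] at hp
      rcases hp with ⟨rfl, rfl⟩ | ⟨rfl, rfl⟩ | ⟨rfl, n, rfl⟩ | ⟨rfl, n, rfl⟩ | ⟨rfl, n, rfl⟩ <;>
        cases c <;> simp [M5, la, lb] at hq <;> subst hq
      · exact Or.inr (Or.inl ⟨rfl, rfl⟩)
      · exact Or.inr (Or.inr (Or.inl ⟨rfl, 0, rfl⟩))
      · refine Or.inr (Or.inr (Or.inl ⟨rfl, n + 1, ?_⟩))
        simp [List.replicate_succ', lb]
      · exact Or.inr (Or.inr (Or.inr (Or.inl ⟨rfl, n, by simp [la]⟩)))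
      · exact Or.inr (Or.inr (Or.inr (Or.inr ⟨rfl, n, by simp [la]⟩)))
    · rintro (⟨rfl, hw⟩ | ⟨rfl, hw⟩ | ⟨rfl, n, hw⟩ | ⟨rfl, n, hw⟩ | ⟨rfl, n, hw⟩)
      · exact absurd hw (by simp)
      · obtain ⟨rfl, rfl⟩ : w = [] ∧ c = la := by
          have h2 : w ++ [c] = ([] : List Bool) ++ [la] := by simpa using hw
          have := List.append_inj' h2 rfl
          simpa using this
        exact ⟨0, by rw [IH]; simp, by simp [M5, la]⟩
      · cases n with
        | zero =>
          obtain ⟨rfl, rfl⟩ : w = [la] ∧ c = la := by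
            have := List.append_inj' (by simpa using hw : w ++ [c] = [la] ++ [la]) rfl
            simpa using this
          exact ⟨1, by rw [IH]; simp, by simp [M5, la]⟩
        | succ m =>
          obtain ⟨rfl, rfl⟩ : w = [la, la] ++ List.replicate m lb ∧ c = lb := by
            have h2 : w ++ [c] = ([la, la] ++ List.replicate m lb) ++ [lb] := by
              simpa [List.replicate_succ', List.append_assoc] using hw
            have := List.append_inj' h2 rfl
            simpa using this
          refine ⟨2, by rw [IH]; simp, by simp [M5, la, lb]⟩
      · obtain ⟨rfl, rfl⟩ : w = [la, la] ++ List.replicate n lb ∧ c = la := by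
          have h2 : w ++ [c] = ([la, la] ++ List.replicate n lb) ++ [la] := by
            simpa [List.append_assoc] using hw
          have := List.append_inj' h2 rfl
          simpa using this
        refine ⟨2, by rw [IH]; simp, by simp [M5, la, lb]⟩
      · obtain ⟨rfl, rfl⟩ : w = [la, la] ++ List.replicate n lb ++ [la] ∧ c = la := by
          have h2 : w ++ [c] = ([la, la] ++ List.replicate n lb ++ [la]) ++ [la] := by
            simp only [List.append_assoc] at hw ⊢
            simpa using hw
          have := List.append_inj' h2 rfl
          simpa using this
        refine ⟨3, by rw [IH]; simp, by simp [M5, la, lb]⟩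

lemma L1 : ∀ (k n : ℕ) (v v' : List Bool),
    List.replicate k lb ++ la :: v = List.replicate n lb ++ la :: v' → k = n := by
  intro k
  induction k with
  | zero =>
    intro n v v' h
    cases n with
    | zero => rfl
    | succ m => simp [List.replicate_succ, la, lb] at h
  | succ j IH =>
    intro n v v' h
    cases n with
    | zero => simp [List.replicate_succ, la, lb] at h
    | succ m =>
      simp only [List.replicate_succ, List.cons_append, List.cons.injEq] at h
      exact congrArg Nat.succ (IH m v v' h.2)

lemma L2 (k : ℕ) (hk : 1 ≤ k) : ∀ (n : ℕ) (s v : List Bool),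
    s ++ la :: (List.replicate k lb ++ la :: v) ≠ List.replicate n lb ++ [la, la] := by
  intro n
  induction n with
  | zero =>
    intro s v h
    have := congrArg List.length h
    simp at this
    omega
  | succ m IH =>
    intro s v h
    cases s with
    | nil => simp [List.replicate_succ, la, lb] at h
    | cons c s' =>
      simp only [List.cons_append, List.replicate_succ, List.cons.injEq] at h
      exact IH s' v h.2

lemma stepSet_mono {σ : Type} (N : NFA Bool σ) {S T : Set σ} (h : S ⊆ T) (c : Bool) :
    N.stepSet S c ⊆ N.stepSet T c := by
  intro q hq
  rw [NFA.mem_stepSet] at hq ⊢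
  obtain ⟨p, hp, hq⟩ := hq
  exact ⟨p, h hp, hq⟩

lemma evalFrom_mono {σ : Type} (N : NFA Bool σ) {S T : Set σ} (h : S ⊆ T) (w : List Bool) :
    N.evalFrom S w ⊆ N.evalFrom T w := by
  induction w generalizing S T with
  | nil => simpa using h
  | cons c w IH =>
    simpa [NFA.evalFrom] using IH (stepSet_mono N h c)

lemma evalFrom_append {σ : Type} (N : NFA Bool σ) (S : Set σ) (u v : List Bool) :
    N.evalFrom S (u ++ v) = N.evalFrom (N.evalFrom S u) v := by
  simp [NFA.evalFrom, List.foldl_append]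

lemma exists_state {σ : Type} (N : NFA Bool σ) {S : Set σ} {w : List Bool} {f : σ}
    (h : f ∈ N.evalFrom S w) : ∃ q ∈ S, f ∈ N.evalFrom {q} w := by
  induction w generalizing S with
  | nil => exact ⟨f, by simpa using h, by simp⟩
  | cons c w IH =>
    simp only [NFA.evalFrom, List.foldl_cons] at h
    obtain ⟨q', hq', hf⟩ := IH h
    rw [NFA.mem_stepSet] at hq'
    obtain ⟨q, hq, hstep⟩ := hq'
    refine ⟨q, hq, ?_⟩
    have hsub : ({q'} : Set σ) ⊆ N.stepSet {q} c := by
      intro x hx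
      rw [Set.mem_singleton_iff] at hx
      subst hx
      rw [NFA.mem_stepSet]
      exact ⟨q, rfl, hstep⟩
    exact evalFrom_mono N hsub w hf

/-- For `W = {a·a·b^k·a·a}` and forbidden pattern `a·b^k·a` (`k ≥ 1`): there is a 5-state
NFA `M` with `W ⊆ L(M)` whose extra words avoid the forbidden pattern as a factor,
whereas every NFA accepting exactly `W` needs at least `k + 5` states. -/
theorem cover_nfa_smaller_than_exact_nfa (k : ℕ) (hk : 1 ≤ k) :
    (∃ M : NFA Bool (Fin 5),
        aabkaa k ∈ M.accepts ∧
        ∀ w ∈ M.accepts, w ≠ aabkaa k → ¬ abka k <:+: w) ∧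
    (∀ (σ : Type) [Fintype σ] (N : NFA Bool σ),
        (N.accepts : Set (List Bool)) = {aabkaa k} → k + 5 ≤ Fintype.card σ) := by
  constructor
  · refine ⟨M5, ?_, ?_⟩
    · rw [NFA.mem_accepts]
      refine ⟨4, by simp [M5], ?_⟩
      have := (M5_eval_char (aabkaa k) 4).2 (Or.inr (Or.inr (Or.inr (Or.inr ⟨rfl, k, by simp [aabkaa]⟩))))
      exact this
    · intro w hw hne hinf
      rw [NFA.mem_accepts] at hw
      obtain ⟨f, hf, hev⟩ := hw
      have hf4 : f = 4 := by simpa [M5] using hf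
      subst hf4
      replace hev : (4 : Fin 5) ∈ M5.eval w := hev
      rw [M5_eval_char] at hev
      rcases hev with ⟨h0, _⟩ | ⟨h0, _⟩ | ⟨h0, _⟩ | ⟨h0, _⟩ | ⟨_, n, rfl⟩
      · exact absurd h0 (by decide)
      · exact absurd h0 (by decide)
      · exact absurd h0 (by decide)
      · exact absurd h0 (by decide)
      obtain ⟨u, v, huv⟩ := hinf
      simp only [abka, List.append_assoc, List.cons_append, List.nil_append] at huv
      match u with
      | [] =>
        obtain ⟨j, rfl⟩ : ∃ j, k = j + 1 := ⟨k - 1, by omega⟩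
        simp [List.replicate_succ, la, lb] at huv
      | [x] =>
        simp only [List.cons_append, List.nil_append, List.cons.injEq] at huv
        have hkn : k = n := L1 k n v [la] (by simpa [List.append_assoc] using huv.2)
        exact hne (by simp [aabkaa, hkn])
      | x :: y :: u' =>
        simp only [List.cons_append, List.cons.injEq] at huv
        exact L2 k hk n u' v (by simpa [List.append_assoc] using huv.2.2)
  · intro σ _ N hN
    have hw : aabkaa k ∈ N.accepts := by rw [hN]; rfl
    rw [NFA.mem_accepts] at hw
    obtain ⟨f, hf, hev⟩ := hw
    have hL : (aabkaa k).length = k + 4 := by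
      simp only [aabkaa, List.length_append, List.length_replicate, List.length_cons,
        List.length_nil]
      omega
    have key : ∀ i : Fin (k + 5), ∃ q, q ∈ N.evalFrom N.start ((aabkaa k).take i) ∧
        ∃ g ∈ N.accept, g ∈ N.evalFrom {q} ((aabkaa k).drop i) := by
      intro i
      have : f ∈ N.evalFrom (N.evalFrom N.start ((aabkaa k).take i)) ((aabkaa k).drop i) := by
        rw [← evalFrom_append, List.take_append_drop]
        exact hev
      obtain ⟨q, hq, hfq⟩ := exists_state N this
      exact ⟨q, hq, f, hf, hfq⟩
    have hinj : Function.Injective (fun i : Fin (k + 5) => (key i).choose) := by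
      have aux : ∀ i j : Fin (k + 5), (i : ℕ) < (j : ℕ) →
          (key i).choose ≠ (key j).choose := by
        intro i j hij heq
        obtain ⟨hqi, fi, hfi, hfei⟩ := (key i).choose_spec
        obtain ⟨hqj, fj, hfj, hfej⟩ := (key j).choose_spec
        rw [← heq] at hfej
        have hmem : ((aabkaa k).take i ++ (aabkaa k).drop j) ∈ N.accepts := by
          rw [NFA.mem_accepts]
          refine ⟨fj, hfj, ?_⟩
          rw [evalFrom_append]
          refine evalFrom_mono N ?_ _ hfej
          intro x hx
          rw [Set.mem_singleton_iff] at hx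
          subst hx
          exact hqi
        rw [hN] at hmem
        replace hmem : (aabkaa k).take i ++ (aabkaa k).drop j = aabkaa k := hmem
        have hlen := congrArg List.length hmem
        have hi : (i : ℕ) ≤ k + 4 := by have := i.isLt; omega
        have hj : (j : ℕ) ≤ k + 4 := by have := j.isLt; omega
        simp [List.length_take, List.length_drop, hL] at hlen
        omega
      intro i j heq
      rcases lt_trichotomy (i : ℕ) (j : ℕ) with h | h | h
      · exact absurd heq (aux i j h)
      · exact Fin.ext h
      · exact absurd heq.symm (aux j i h)
    have := Fintype.card_le_of_injective _ hinj
    simpa using this
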